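/- In an implicative aBE algebra, for all x, y, z: (((x → y) → z) → y) → (x → y) = 1. -/
import Mathlib


class ImplicativeABE (X : Type*) where
  imp : X → X → X
  one : X
  one_imp : ∀ x, imp one x = x
  imp_one : ∀ x, imp x one = one
  imp_self : ∀ x, imp x x = one
  exch : ∀ x y z, imp x (imp y z) = imp y (imp x z)
  antisymm : ∀ x y, imp x y = one → imp y x = one → x = y
  implicative : ∀ x y, imp (imp x y) x = x

infixr:60 " ⮕ " => ImplicativeABE.imp
notation "𝟙" => ImplicativeABE.one

theorem stmt4 {X : Type*} [ImplicativeABE X] (x y z : X) :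
    (((x ⮕ y) ⮕ z) ⮕ y) ⮕ (x ⮕ y) = 𝟙 := by
  have h1 : x ⮕ y = x ⮕ ((((x ⮕ y) ⮕ z)) ⮕ y) := by
    rw [← ImplicativeABE.exch, ImplicativeABE.implicative]
  nth_rewrite 2 [h1]
  rw [ImplicativeABE.exch, ImplicativeABE.imp_self, ImplicativeABE.imp_one]
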